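/- Bellman–Ford characterization. For the Bellman–Ford iterates d from source s, for every t ≥ 0 and every vertex v: d t v equals the infimum of the weights of all walks from s to v with at most t edges (and equals ⊤ if no such walk exists). Since there are only finitely many such walks, this infimum is attained whenever it is not ⊤. -/

import Mathlib

/-- `IsWalk E p t a b` : `p 0 = a`, `p t = b`, and each consecutive pair is an edge. -/
def IsWalk {V : Type*} (E : V → V → Prop) (p : ℕ → V) (t : ℕ) (a b : V) : Prop :=
  p 0 = a ∧ p t = b ∧ ∀ i < t, E (p i) (p (i + 1))

/-- Weight of a walk with `t` edges. -/
def walkWeight {V : Type*} (w : V → V → ℝ) (p : ℕ → V) (t : ℕ) : ℝ :=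
  ∑ i ∈ Finset.range t, w (p i) (p (i + 1))

open Classical in
/-- Bellman–Ford iterates from source `s`. -/
noncomputable def BF {V : Type*} (E : V → V → Prop) (w : V → V → ℝ) (s : V) :
    ℕ → V → EReal
  | 0, v => if v = s then 0 else ⊤
  | (t + 1), v =>
      min (BF E w s t v) (⨅ u : {u : V // E u v}, (BF E w s t u.1 + (w u.1 v : EReal)))

lemma BF_le_walk {V : Type*} (E : V → V → Prop) (w : V → V → ℝ) (s : V) :
    ∀ (t : ℕ) (v : V) (p : ℕ → V) (l : ℕ), l ≤ t → IsWalk E p l s v →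
      BF E w s t v ≤ (walkWeight w p l : EReal) := by
  intro t
  induction t with
  | zero =>
    intro v p l hl hw
    interval_cases l
    obtain ⟨h0, h1, _⟩ := hw
    have hv : v = s := by rw [← h1, h0]
    simp [BF, hv, walkWeight]
  | succ t ih =>
    intro v p l hl hw
    rcases Nat.lt_succ_iff_lt_or_eq.mp (Nat.lt_succ_of_le hl) with h | h
    · calc BF E w s (t+1) v ≤ BF E w s t v := min_le_left _ _
        _ ≤ _ := ih v p l (Nat.lt_succ_iff.mp h) hw
    · subst h
      obtain ⟨h0, h1, he⟩ := hw
      have hedge : E (p t) v := h1 ▸ he t (Nat.lt_succ_self t)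
      have hpref : IsWalk E p t s (p t) := ⟨h0, rfl, fun i hi => he i (hi.trans (Nat.lt_succ_self t))⟩
      have h2 : BF E w s (t+1) v ≤ BF E w s t (p t) + (w (p t) v : EReal) :=
        (min_le_right _ _).trans (iInf_le _ (⟨p t, hedge⟩ : {u : V // E u v}))
      have h3 : BF E w s t (p t) + (w (p t) v : EReal)
          ≤ (walkWeight w p t : EReal) + (w (p t) v : EReal) :=
        add_le_add_left (ih (p t) p t le_rfl hpref) _
      have h4 : ((walkWeight w p (t+1) : ℝ) : EReal)
          = (walkWeight w p t : EReal) + (w (p t) v : EReal) := by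
        rw [← EReal.coe_add]
        norm_cast
        rw [walkWeight, walkWeight, Finset.sum_range_succ, h1]
      rw [h4]
      exact h2.trans h3

lemma BF_attained {V : Type*} [Fintype V] (E : V → V → Prop) (w : V → V → ℝ) (s : V) :
    ∀ (t : ℕ) (v : V), BF E w s t v ≠ ⊤ →
      ∃ (p : ℕ → V) (l : ℕ), l ≤ t ∧ IsWalk E p l s v ∧
        (walkWeight w p l : EReal) = BF E w s t v := by
  intro t
  induction t with
  | zero =>
    intro v hv
    have hvs : v = s := by
      by_contra h
      simp [BF, h] at hv
    refine ⟨fun _ => s, 0, le_rfl, ⟨rfl, hvs ▸ rfl, by omega⟩, ?_⟩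
    simp [BF, hvs, walkWeight]
  | succ t ih =>
    intro v hv
    by_cases hc : BF E w s (t+1) v = BF E w s t v
    · obtain ⟨p, l, hl, hw, heq⟩ := ih v (hc ▸ hv)
      exact ⟨p, l, hl.trans (Nat.le_succ t), hw, heq.trans hc.symm⟩
    · have hmin : BF E w s (t+1) v
          = ⨅ u : {u : V // E u v}, (BF E w s t u.1 + (w u.1 v : EReal)) := by
        rcases min_cases (BF E w s t v)
          (⨅ u : {u : V // E u v}, (BF E w s t u.1 + (w u.1 v : EReal))) with h | h
        · exact absurd h.1 hc
        · exact h.1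
      have hne : Nonempty {u : V // E u v} := by
        by_contra h
        rw [not_nonempty_iff] at h
        rw [hmin, iInf_of_empty] at hv
        exact hv rfl
      obtain ⟨u, hu⟩ := exists_eq_ciInf_of_finite
        (f := fun u : {u : V // E u v} => BF E w s t u.1 + (w u.1 v : EReal))
      have hval : BF E w s t u.1 + (w u.1 v : EReal) = BF E w s (t+1) v := hu.trans hmin.symm
      have hune : BF E w s t u.1 ≠ ⊤ := by
        intro h
        apply hv
        rw [← hval, h]
        exact EReal.top_add_of_ne_bot (EReal.coe_ne_bot _)
      obtain ⟨q, l, hl, ⟨hq0, hql, hqe⟩, heq⟩ := ih u.1 hune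
      set p : ℕ → V := fun i => if i ≤ l then q i else v with hp
      have hlid : ∀ i ≤ l, p i = q i := fun i hi => by simp [hp, hi]
      have hpl1 : p (l + 1) = v := by simp [hp]
      have hwt : walkWeight w p (l + 1) = walkWeight w q l + w u.1 v := by
        rw [walkWeight, walkWeight, Finset.sum_range_succ, hlid l le_rfl, hql, hpl1]
        congr 1
        refine Finset.sum_congr rfl fun i hi => ?_
        rw [Finset.mem_range] at hi
        rw [hlid i (by omega), hlid (i + 1) (by omega)]
      refine ⟨p, l + 1, Nat.succ_le_succ hl, ⟨?_, hpl1, ?_⟩, ?_⟩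
      · rw [hlid 0 (Nat.zero_le l), hq0]
      · intro i hi
        rcases Nat.lt_succ_iff_lt_or_eq.mp hi with h | h
        · rw [hlid i (by omega), hlid (i + 1) (by omega)]
          exact hqe i h
        · rw [h, hlid l le_rfl, hql, hpl1]
          exact u.2
      · rw [hwt, EReal.coe_add, heq]
        exact hval


/-- Bellman–Ford characterization: `d t v` is the infimum of weights of walks
from `s` to `v` with at most `t` edges (and `⊤` if there is none), and this
infimum is attained whenever it is not `⊤`. -/
theorem bellmanFord_characterization
    {V : Type*} [Fintype V] [Nonempty V]
    (E : V → V → Prop) (w : V → V → ℝ) (s : V) :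
    (∀ (t : ℕ) (v : V),
      BF E w s t v =
        ⨅ (p : ℕ → V) (l : ℕ) (_ : l ≤ t) (_ : IsWalk E p l s v),
          (walkWeight w p l : EReal)) ∧
    (∀ (t : ℕ) (v : V), BF E w s t v ≠ ⊤ →
      ∃ (p : ℕ → V) (l : ℕ), l ≤ t ∧ IsWalk E p l s v ∧
        (walkWeight w p l : EReal) = BF E w s t v) := by
  constructor
  · intro t v
    apply le_antisymm
    · exact le_iInf fun p => le_iInf fun l => le_iInf fun hl => le_iInf fun hw =>
        BF_le_walk E w s t v p l hl hw
    · by_cases h : BF E w s t v = ⊤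
      · rw [h]; exact le_top
      · obtain ⟨p, l, hl, hw, heq⟩ := BF_attained E w s t v h
        calc (⨅ (p : ℕ → V) (l : ℕ) (_ : l ≤ t) (_ : IsWalk E p l s v),
              (walkWeight w p l : EReal)) ≤ (walkWeight w p l : EReal) := by
              exact (iInf_le _ p).trans ((iInf_le _ l).trans ((iInf_le _ hl).trans (iInf_le _ hw)))
          _ = BF E w s t v := heq
  · exact BF_attained E w s
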